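/- Let F be a field and let A(b) denote the n×n matrix with fixed diagonal (d_1,...,d_n) ∈ F^n, subdiagonal entries 1, last column (b_1,...,b_{n-1},d_n), and zeros elsewhere, as a function of b = (b_1,...,b_{n-1}) ∈ F^{n-1}. Then the map F^{n-1} → F^{n-1} sending b to the tuple of coefficients (c_0, c_1, ..., c_{n-2}) of det(tI - A(b)) is a bijection. -/

import Mathlib

open Polynomial

/-- The matrix with diagonal `d`, subdiagonal entries `1`, last column
entries `b` above the diagonal, and zeros elsewhere. -/
def matA {F : Type*} [Field F] (n : ℕ) (d : Fin n → F) (b : Fin (n - 1) → F) :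
    Matrix (Fin n) (Fin n) F :=
  Matrix.of fun i j =>
    if i = j then d i
    else if (i : ℕ) = (j : ℕ) + 1 then 1
    else if (j : ℕ) = n - 1 then (if h : (i : ℕ) < n - 1 then b ⟨i, h⟩ else 0)
    else 0

/-- ℕ-indexed version of `matA`. -/
def matA' {F : Type*} [Field F] (n : ℕ) (d b : ℕ → F) : Matrix (Fin n) (Fin n) F :=
  Matrix.of fun i j =>
    if (i : ℕ) = (j : ℕ) then d i
    else if (i : ℕ) = (j : ℕ) + 1 then 1
    else if (j : ℕ) = n - 1 then (if (i : ℕ) < n - 1 then b i else 0)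
    else 0

lemma charmatrix_submatrix {F : Type*} [Field F] {n m : ℕ}
    (M : Matrix (Fin n) (Fin n) F) (f : Fin m → Fin n) (hf : Function.Injective f) :
    (Matrix.charmatrix M).submatrix f f = Matrix.charmatrix (M.submatrix f f) := by
  ext i j
  by_cases h : i = j
  · subst h; simp [Matrix.charmatrix_apply_eq]
  · rw [Matrix.submatrix_apply, Matrix.charmatrix_apply_ne _ _ _ (fun hfij => h (hf hfij)),
      Matrix.charmatrix_apply_ne _ _ _ h, Matrix.submatrix_apply]

lemma charpoly_matA' {F : Type*} [Field F] (n : ℕ) (d b : ℕ → F) :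
    (matA' n d b).charpoly =
      (∏ j ∈ Finset.range n, (X - C (d j))) -
        ∑ i ∈ Finset.range (n - 1), C (b i) * ∏ j ∈ Finset.range i, (X - C (d j)) := by
  induction n generalizing d b with
  | zero => simp [Matrix.charpoly, Matrix.det_fin_zero]
  | succ n ih =>
    match n with
    | 0 =>
      simp [Matrix.charpoly, Matrix.det_fin_one, Matrix.charmatrix_apply_eq, matA']
    | Nat.succ n =>
      rw [Matrix.charpoly, Matrix.det_succ_row_zero]
      have key : ∑ j : Fin (n + 2), (-1 : F[X]) ^ (j : ℕ) *
            (Matrix.charmatrix (matA' (n + 2) d b)) 0 j *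
            ((Matrix.charmatrix (matA' (n + 2) d b)).submatrix Fin.succ j.succAbove).det =
          ((-1 : F[X]) ^ ((0 : Fin (n+2)) : ℕ) *
            (Matrix.charmatrix (matA' (n + 2) d b)) 0 0 *
            ((Matrix.charmatrix (matA' (n + 2) d b)).submatrix Fin.succ
              (0 : Fin (n+2)).succAbove).det) +
          ((-1 : F[X]) ^ ((Fin.last (n+1) : Fin (n+2)) : ℕ) *
            (Matrix.charmatrix (matA' (n + 2) d b)) 0 (Fin.last (n+1)) *
            ((Matrix.charmatrix (matA' (n + 2) d b)).submatrix Fin.succ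
              (Fin.last (n+1)).succAbove).det) := by
        apply Finset.sum_eq_add_of_mem _ _ (Finset.mem_univ _) (Finset.mem_univ _)
        · intro hc
          have := congrArg Fin.val hc
          simp [Fin.last] at this
        · intro k _ hk
          obtain ⟨hk0, hkl⟩ := hk
          have h1 : (Matrix.charmatrix (matA' (n + 2) d b)) 0 k = 0 := by
            have hv0 : (k : ℕ) ≠ 0 := fun h => hk0 (Fin.ext (by simpa using h))
            have hvl : (k : ℕ) ≠ n + 1 := fun h => hkl (Fin.ext (by simpa using h))
            rw [Matrix.charmatrix_apply_ne _ _ _ (Ne.symm hk0)]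
            simp only [matA', Matrix.of_apply, Fin.val_zero]
            split_ifs <;> first | omega | simp_all
          rw [h1, mul_zero, zero_mul]
      rw [key]
      -- the submatrix at column 0
      have hsub : (matA' (n + 2) d b).submatrix Fin.succ Fin.succ =
          matA' (n + 1) (fun k => d (k + 1)) (fun k => b (k + 1)) := by
        ext i j
        simp only [matA', Matrix.submatrix_apply, Matrix.of_apply, Fin.val_succ]
        split_ifs <;> first | rfl | omega | simp_all
      have h0 : ((Matrix.charmatrix (matA' (n + 2) d b)).submatrix Fin.succ
          (0 : Fin (n+2)).succAbove).det =
          (matA' (n + 1) (fun k => d (k + 1)) (fun k => b (k + 1))).charpoly := by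
        rw [Fin.succAbove_zero, charmatrix_submatrix _ _ (Fin.succ_injective _), hsub]
        rfl
      -- the submatrix at the last column
      have hl : ((Matrix.charmatrix (matA' (n + 2) d b)).submatrix Fin.succ
          (Fin.last (n+1)).succAbove).det = (-1 : F[X]) ^ (n + 1) := by
        rw [Fin.succAbove_last]
        have htri : ((Matrix.charmatrix (matA' (n + 2) d b)).submatrix Fin.succ
            Fin.castSucc).BlockTriangular id := by
          intro i j hij
          simp only [id] at hij
          rw [Matrix.submatrix_apply, Matrix.charmatrix_apply_ne]
          · simp only [matA', Matrix.of_apply, Fin.val_succ, Fin.coe_castSucc]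
            split_ifs <;> first | omega | simp_all
          · intro h
            have := congrArg Fin.val h
            simp only [Fin.val_succ, Fin.coe_castSucc] at this
            omega
        rw [Matrix.det_of_upperTriangular htri]
        have : ∀ i : Fin (n+1), ((Matrix.charmatrix (matA' (n + 2) d b)).submatrix Fin.succ
            Fin.castSucc) i i = -1 := by
          intro i
          rw [Matrix.submatrix_apply, Matrix.charmatrix_apply_ne]
          · simp only [matA', Matrix.of_apply, Fin.val_succ, Fin.coe_castSucc]
            split_ifs <;> first | omega | simp_all
          · intro h
            have := congrArg Fin.val h
            simp only [Fin.val_succ, Fin.coe_castSucc] at this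
            omega
        rw [Finset.prod_congr rfl (fun i _ => this i)]
        simp
      have hentry0 : (Matrix.charmatrix (matA' (n + 2) d b)) 0 0 = X - C (d 0) := by
        rw [Matrix.charmatrix_apply_eq]
        simp [matA']
      have hentryl : (Matrix.charmatrix (matA' (n + 2) d b)) 0 (Fin.last (n+1)) = -C (b 0) := by
        rw [Matrix.charmatrix_apply_ne]
        · simp only [matA', Matrix.of_apply, Fin.val_zero, Fin.val_last]
          split_ifs <;> first | rfl | omega | simp_all
        · intro h
          have := congrArg Fin.val h
          simp [Fin.last] at this
      rw [h0, hl, hentry0, hentryl, ih]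
      -- now pure algebra
      have hP : ∏ j ∈ Finset.range (n + 2), (X - C (d j)) =
          (X - C (d 0)) * ∏ j ∈ Finset.range (n + 1), (X - C (d (j + 1))) := by
        rw [Finset.prod_range_succ'] ; ring
      have hS : ∑ i ∈ Finset.range (n + 2 - 1), C (b i) * ∏ j ∈ Finset.range i, (X - C (d j)) =
          C (b 0) + (X - C (d 0)) *
            ∑ i ∈ Finset.range (n + 1 - 1), C (b (i + 1)) *
              ∏ j ∈ Finset.range i, (X - C (d (j + 1))) := by
        have : (n + 2 - 1) = (n + 1 - 1) + 1 := rfl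
        rw [this, Finset.sum_range_succ', Finset.mul_sum]
        simp only [Finset.range_zero, Finset.prod_empty, mul_one]
        rw [add_comm]
        congr 1
        apply Finset.sum_congr rfl
        intro i _
        rw [Finset.prod_range_succ']
        ring
      rw [hP, hS]
      have hsq : ((-1 : F[X]) ^ (n+1)) * ((-1 : F[X]) ^ (n+1)) = 1 := by
        rw [← pow_add]; exact Even.neg_one_pow ⟨n + 1, by ring⟩
      rw [Fin.val_last, Fin.val_zero, pow_zero]
      linear_combination (-(C (b 0))) * hsq

/-- The map sending `b` to the coefficients `(c_0, …, c_{n-2})` of the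
characteristic polynomial of `A(b)` is a bijection `F^{n-1} → F^{n-1}`. -/
theorem stmt13 {F : Type*} [Field F] (n : ℕ) (hn : 1 ≤ n) (d : Fin n → F) :
    Function.Bijective
      (fun b : Fin (n - 1) → F =>
        fun i : Fin (n - 1) => (matA n d b).charpoly.coeff (i : ℕ)) := by
  obtain ⟨m, rfl⟩ : ∃ m, n = m + 1 := ⟨n - 1, by omega⟩
  set d' : ℕ → F := fun k => if h : k < m + 1 then d ⟨k, h⟩ else 0 with hd'
  set Q : ℕ → F[X] := fun i => ∏ j ∈ Finset.range i, (X - C (d' j)) with hQ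
  have hQmon : ∀ i, (Q i).Monic := fun i =>
    monic_prod_of_monic _ _ fun j _ => monic_X_sub_C (d' j)
  have hQdeg : ∀ i, (Q i).natDegree = i := by
    intro i
    rw [hQ]
    rw [Polynomial.natDegree_prod_of_monic _ _ fun j _ => monic_X_sub_C (d' j)]
    simp
  set M : Matrix (Fin m) (Fin m) F := Matrix.of fun k i => (Q i).coeff k with hM
  have hMtri : M.BlockTriangular id := by
    intro i j hij
    simp only [id] at hij
    rw [hM, Matrix.of_apply]
    apply Polynomial.coeff_eq_zero_of_natDegree_lt
    rw [hQdeg]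
    exact_mod_cast hij
  have hMdet : M.det = 1 := by
    rw [Matrix.det_of_upperTriangular hMtri]
    have : ∀ i : Fin m, M i i = 1 := by
      intro i
      have := (hQmon i).coeff_natDegree
      rw [hQdeg] at this
      simpa [hM] using this
    rw [Finset.prod_congr rfl fun i _ => this i, Finset.prod_const_one]
  have hMunit : IsUnit M := by
    rw [Matrix.isUnit_iff_isUnit_det, hMdet]
    exact isUnit_one
  set c0 : Fin m → F := fun k => (∏ j ∈ Finset.range (m + 1), (X - C (d' j))).coeff k with hc0
  have hkey : (fun b : Fin m → F =>
      fun k : Fin m => (matA (m + 1) d b).charpoly.coeff (k : ℕ)) =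
      (fun v => c0 - v) ∘ M.mulVec := by
    funext b
    funext k
    have hmat : matA (m + 1) d b =
        matA' (m + 1) d' (fun i => if h : i < m then b ⟨i, h⟩ else 0) := by
      ext i j
      simp only [matA, matA', Matrix.of_apply]
      by_cases hij : i = j
      · rw [if_pos hij, if_pos (by rw [hij])]
        simp [hd']
        exact fun h => absurd i.isLt (by omega)
      · rw [if_neg hij, if_neg (fun h => hij (Fin.ext h))]
        by_cases hs : (i : ℕ) = (j : ℕ) + 1
        · rw [if_pos hs, if_pos hs]
        · rw [if_neg hs, if_neg hs]
          by_cases hl : (j : ℕ) = m + 1 - 1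
          · rw [if_pos hl, if_pos hl]
            by_cases hi : (i : ℕ) < m + 1 - 1
            · rw [dif_pos hi, if_pos hi, dif_pos (by omega : (i : ℕ) < m)]
            · rw [dif_neg hi, if_neg hi]
          · rw [if_neg hl, if_neg hl]
    rw [hmat, charpoly_matA']
    rw [Polynomial.coeff_sub]
    have hsum : (∑ i ∈ Finset.range (m + 1 - 1),
        C (if h : i < m then b ⟨i, h⟩ else 0) * ∏ j ∈ Finset.range i, (X - C (d' j))).coeff
          (k : ℕ) = M.mulVec b k := by
      rw [Polynomial.finset_sum_coeff]
      have hrange : (m + 1 - 1) = m := rfl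
      rw [hrange, Finset.sum_range fun i =>
        (C (if h : i < m then b ⟨i, h⟩ else 0) * ∏ j ∈ Finset.range i, (X - C (d' j))).coeff
          (k : ℕ)]
      simp only [Matrix.mulVec, dotProduct]
      apply Finset.sum_congr rfl
      intro i _
      rw [Polynomial.coeff_C_mul, dif_pos i.isLt]
      simp only [hM, Matrix.of_apply, Fin.eta, hQ]
      ring
    rw [hsum]
    rfl
  have : (Fin (m + 1 - 1) → F) = (Fin m → F) := rfl
  show Function.Bijective (fun b : Fin m → F =>
      fun k : Fin m => (matA (m + 1) d b).charpoly.coeff (k : ℕ))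
  rw [hkey]
  exact (Equiv.subLeft c0).bijective.comp
    ⟨Matrix.mulVec_injective_iff_isUnit.2 hMunit, Matrix.mulVec_surjective_iff_isUnit.2 hMunit⟩
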